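/- For every nonnegative integer n, six times the number of integer solutions (x,y,z) to x² + 3y² + 3z² + 2yz = 2n+1 equals the number of integer solutions to x² + y² + z² = 4n+2. -/
import Mathlib

/-- Place the "even" coordinate `c` into position `p` of the triple. -/
private def place (p : Fin 3) (a b c : ℤ) : ℤ × ℤ × ℤ :=
  if p = 0 then (c, (a, b)) else if p = 1 then (a, (c, b)) else (a, (b, c))

private lemma place_eval0 (a b c : ℤ) : place 0 a b c = (c, (a, b)) := rfl

private lemma place_eval1 (a b c : ℤ) : place 1 a b c = (a, (c, b)) := by
  unfold place; rw [if_neg (by decide), if_pos rfl]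

private lemma place_eval2 (a b c : ℤ) : place 2 a b c = (a, (b, c)) := by
  unfold place; rw [if_neg (by decide), if_neg (by decide)]

/-- Core of the inverse map. -/
private def core (a b0 c : ℤ) : Bool × (ℤ × ℤ × ℤ) :=
  if (a - b0 - c) % 4 = 0 then
    (false, ((a + b0) / 2, ((a - b0 + c) / 4, (c - a + b0) / 4)))
  else
    (true, ((a - b0) / 2, ((a + b0 + c) / 4, (c - a - b0) / 4)))

/-- The forward map on raw data. -/
private def fwdT (t : (Fin 3 × Bool) × (ℤ × ℤ × ℤ)) : ℤ × ℤ × ℤ :=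
  place t.1.1 (t.2.1 + t.2.2.1 - t.2.2.2)
    (if t.1.2 then -(t.2.1 - t.2.2.1 + t.2.2.2) else t.2.1 - t.2.2.1 + t.2.2.2)
    (2 * t.2.2.1 + 2 * t.2.2.2)

private lemma fwdT_def (p : Fin 3) (s : Bool) (q : ℤ × ℤ × ℤ) :
    fwdT ((p, s), q) = place p (q.1 + q.2.1 - q.2.2)
      (if s = true then -(q.1 - q.2.1 + q.2.2) else q.1 - q.2.1 + q.2.2)
      (2 * q.2.1 + 2 * q.2.2) := rfl

private lemma fwdT_def' (p : Fin 3) (s : Bool) (x y z : ℤ) :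
    fwdT ((p, s), (x, (y, z))) = place p (x + y - z)
      (if s = true then -(x - y + z) else x - y + z) (2 * y + 2 * z) := rfl

private lemma fwdT_def'_false (p : Fin 3) (x y z : ℤ) :
    fwdT ((p, false), (x, (y, z))) = place p (x + y - z) (x - y + z) (2 * y + 2 * z) := rfl

private lemma fwdT_def'_true (p : Fin 3) (x y z : ℤ) :
    fwdT ((p, true), (x, (y, z))) = place p (x + y - z) (-(x - y + z)) (2 * y + 2 * z) := rfl

private lemma pair_subtype_ext {α : Type} {P : ℤ × ℤ × ℤ → Prop}
    {X Y : α × (ℤ × ℤ × ℤ)} (hXY : X = Y) (hX : P X.2) (hY : P Y.2) :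
    ((X.1, ⟨X.2, hX⟩) : α × {t : ℤ × ℤ × ℤ // P t}) = (Y.1, ⟨Y.2, hY⟩) := by
  subst hXY; rfl

/-- The inverse map on raw data. -/
private def inv3 : ℤ × ℤ × ℤ → (Fin 3 × Bool) × (ℤ × ℤ × ℤ)
  | (u, v, w) =>
    if u % 2 = 0 then ((0, (core v w u).1), (core v w u).2)
    else if v % 2 = 0 then ((1, (core u w v).1), (core u w v).2)
    else ((2, (core u v w).1), (core u v w).2)

private lemma sq4 (t : ℤ) : t ^ 2 % 4 = 0 ∧ t % 2 = 0 ∨ t ^ 2 % 4 = 1 ∧ t % 2 = 1 := by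
  rcases Int.even_or_odd t with ⟨k, hk⟩ | ⟨k, hk⟩
  · left
    have h2 : t ^ 2 = 4 * k ^ 2 := by subst hk; ring
    obtain ⟨m, hm⟩ : ∃ m, k ^ 2 = m := ⟨_, rfl⟩
    rw [hm] at h2
    exact ⟨by rw [h2]; omega, by omega⟩
  · right
    have h2 : t ^ 2 = 4 * (k ^ 2 + k) + 1 := by subst hk; ring
    obtain ⟨m, hm⟩ : ∃ m, k ^ 2 + k = m := ⟨_, rfl⟩
    rw [hm] at h2
    exact ⟨by rw [h2]; omega, by omega⟩

private lemma oddH (x y z m : ℤ) (h : x ^ 2 + 3 * y ^ 2 + 3 * z ^ 2 + 2 * y * z = 2 * m + 1) :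
    (x + y + z) % 2 = 1 := by
  have h' : x ^ 2 + 2 * (y + z) ^ 2 + (y - z) ^ 2 = 2 * m + 1 := by linear_combination h
  have hx := sq4 x
  have hu := sq4 (y + z)
  have hv := sq4 (y - z)
  obtain ⟨X, hX⟩ : ∃ t, x ^ 2 = t := ⟨_, rfl⟩
  obtain ⟨U, hU⟩ : ∃ t, (y + z) ^ 2 = t := ⟨_, rfl⟩
  obtain ⟨V, hV⟩ : ∃ t, (y - z) ^ 2 = t := ⟨_, rfl⟩
  rw [hX] at h' hx
  rw [hU] at h' hu
  rw [hV] at h' hv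
  omega

private lemma sphereParity (u v w m : ℤ) (h : u ^ 2 + v ^ 2 + w ^ 2 = 4 * m + 2) :
    (u % 2 = 0 ∧ v % 2 = 1 ∧ w % 2 = 1) ∨ (u % 2 = 1 ∧ v % 2 = 0 ∧ w % 2 = 1) ∨
      (u % 2 = 1 ∧ v % 2 = 1 ∧ w % 2 = 0) := by
  have hu := sq4 u
  have hv := sq4 v
  have hw := sq4 w
  obtain ⟨U, hU⟩ : ∃ t, u ^ 2 = t := ⟨_, rfl⟩
  obtain ⟨V, hV⟩ : ∃ t, v ^ 2 = t := ⟨_, rfl⟩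
  obtain ⟨W, hW⟩ : ∃ t, w ^ 2 = t := ⟨_, rfl⟩
  rw [hU] at h hu
  rw [hV] at h hv
  rw [hW] at h hw
  omega

private lemma fin3_cases (p : Fin 3) : p = 0 ∨ p = 1 ∨ p = 2 := by
  fin_cases p
  · exact Or.inl rfl
  · exact Or.inr (Or.inl rfl)
  · exact Or.inr (Or.inr rfl)

private lemma place_sum (p : Fin 3) (a b c : ℤ) :
    (place p a b c).1 ^ 2 + (place p a b c).2.1 ^ 2 + (place p a b c).2.2 ^ 2 =
      a ^ 2 + b ^ 2 + c ^ 2 := by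
  rcases fin3_cases p with rfl | rfl | rfl
  · rw [place_eval0]
    show c ^ 2 + a ^ 2 + b ^ 2 = a ^ 2 + b ^ 2 + c ^ 2
    ring
  · rw [place_eval1]
    show a ^ 2 + c ^ 2 + b ^ 2 = a ^ 2 + b ^ 2 + c ^ 2
    ring
  · rw [place_eval2]

private lemma fwdT_sphere (p : Fin 3) (s : Bool) (x y z m : ℤ)
    (h : x ^ 2 + 3 * y ^ 2 + 3 * z ^ 2 + 2 * y * z = 2 * m + 1) :
    (fwdT ((p, s), (x, (y, z)))).1 ^ 2 + (fwdT ((p, s), (x, (y, z)))).2.1 ^ 2 +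
      (fwdT ((p, s), (x, (y, z)))).2.2 ^ 2 = 4 * m + 2 := by
  cases s
  · rw [fwdT_def'_false, place_sum]
    linear_combination 2 * h
  · rw [fwdT_def'_true, place_sum]
    linear_combination 2 * h

private lemma core_spec (a b0 c m : ℤ) (ha : a % 2 = 1) (hb : b0 % 2 = 1) (hc : c % 2 = 0)
    (h : a ^ 2 + b0 ^ 2 + c ^ 2 = 4 * m + 2) :
    (core a b0 c).2.1 ^ 2 + 3 * (core a b0 c).2.2.1 ^ 2 + 3 * (core a b0 c).2.2.2 ^ 2 +
      2 * (core a b0 c).2.2.1 * (core a b0 c).2.2.2 = 2 * m + 1 := by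
  by_cases h4 : (a - b0 - c) % 4 = 0
  · have hcore : core a b0 c =
        (false, ((a + b0) / 2, ((a - b0 + c) / 4, (c - a + b0) / 4))) := by
      unfold core; rw [if_pos h4]
    rw [hcore]
    have e1 : 2 * ((a + b0) / 2) = a + b0 := by omega
    have e2 : 4 * ((a - b0 + c) / 4) = a - b0 + c := by omega
    have e3 : 4 * ((c - a + b0) / 4) = c - a + b0 := by omega
    obtain ⟨X, hX⟩ : ∃ t, (a + b0) / 2 = t := ⟨_, rfl⟩
    obtain ⟨Y, hY⟩ : ∃ t, (a - b0 + c) / 4 = t := ⟨_, rfl⟩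
    obtain ⟨Z, hZ⟩ : ∃ t, (c - a + b0) / 4 = t := ⟨_, rfl⟩
    rw [hX] at e1 ⊢
    rw [hY] at e2 ⊢
    rw [hZ] at e3 ⊢
    have ea : a = X + Y - Z := by omega
    have eb : b0 = X - Y + Z := by omega
    have ec : c = 2 * Y + 2 * Z := by omega
    rw [ea, eb, ec] at h
    have h2 : 2 * (X ^ 2 + 3 * Y ^ 2 + 3 * Z ^ 2 + 2 * Y * Z) = 2 * (2 * m + 1) := by
      linear_combination h
    exact mul_left_cancel₀ (by norm_num : (2 : ℤ) ≠ 0) h2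
  · have hcore : core a b0 c =
        (true, ((a - b0) / 2, ((a + b0 + c) / 4, (c - a - b0) / 4))) := by
      unfold core; rw [if_neg h4]
    rw [hcore]
    have e1 : 2 * ((a - b0) / 2) = a - b0 := by omega
    have e2 : 4 * ((a + b0 + c) / 4) = a + b0 + c := by omega
    have e3 : 4 * ((c - a - b0) / 4) = c - a - b0 := by omega
    obtain ⟨X, hX⟩ : ∃ t, (a - b0) / 2 = t := ⟨_, rfl⟩
    obtain ⟨Y, hY⟩ : ∃ t, (a + b0 + c) / 4 = t := ⟨_, rfl⟩
    obtain ⟨Z, hZ⟩ : ∃ t, (c - a - b0) / 4 = t := ⟨_, rfl⟩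
    rw [hX] at e1 ⊢
    rw [hY] at e2 ⊢
    rw [hZ] at e3 ⊢
    have ea : a = X + Y - Z := by omega
    have eb : b0 = Y - Z - X := by omega
    have ec : c = 2 * Y + 2 * Z := by omega
    rw [ea, eb, ec] at h
    have h2 : 2 * (X ^ 2 + 3 * Y ^ 2 + 3 * Z ^ 2 + 2 * Y * Z) = 2 * (2 * m + 1) := by
      linear_combination h
    exact mul_left_cancel₀ (by norm_num : (2 : ℤ) ≠ 0) h2

private lemma inv3_H (u v w m : ℤ) (h : u ^ 2 + v ^ 2 + w ^ 2 = 4 * m + 2) :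
    (inv3 (u, (v, w))).2.1 ^ 2 + 3 * (inv3 (u, (v, w))).2.2.1 ^ 2 +
      3 * (inv3 (u, (v, w))).2.2.2 ^ 2 +
      2 * (inv3 (u, (v, w))).2.2.1 * (inv3 (u, (v, w))).2.2.2 = 2 * m + 1 := by
  rcases sphereParity u v w m h with ⟨h1, h2, h3⟩ | ⟨h1, h2, h3⟩ | ⟨h1, h2, h3⟩
  · simp only [inv3]
    rw [if_pos h1]
    exact core_spec v w u m h2 h3 h1 (by linear_combination h)
  · simp only [inv3]
    rw [if_neg (by omega), if_pos h2]
    exact core_spec u w v m h1 h3 h2 (by linear_combination h)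
  · simp only [inv3]
    rw [if_neg (by omega), if_neg (by omega)]
    exact core_spec u v w m h1 h2 h3 h

private lemma core_fwd_false (x y z : ℤ) :
    core (x + y - z) (x - y + z) (2 * y + 2 * z) = (false, (x, (y, z))) := by
  unfold core
  rw [if_pos (by omega)]
  refine Prod.ext rfl (Prod.ext (by simp; omega) (Prod.ext (by simp; omega) (by simp; omega)))

private lemma core_fwd_true (x y z : ℤ) (h : (x + y + z) % 2 = 1) :
    core (x + y - z) (-(x - y + z)) (2 * y + 2 * z) = (true, (x, (y, z))) := by
  unfold core
  rw [if_neg (by omega)]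
  refine Prod.ext rfl (Prod.ext (by simp; omega) (Prod.ext (by simp; omega) (by simp; omega)))

private lemma inv3_fwdT (p : Fin 3) (s : Bool) (x y z : ℤ) (h : (x + y + z) % 2 = 1) :
    inv3 (fwdT ((p, s), (x, (y, z)))) = ((p, s), (x, (y, z))) := by
  have hA : ¬((x + y - z) % 2 = 0) := by omega
  have hC : (2 * y + 2 * z) % 2 = 0 := by omega
  cases s
  · have hB : ¬((x - y + z) % 2 = 0) := by omega
    have hcore := core_fwd_false x y z
    rcases fin3_cases p with rfl | rfl | rfl
    · rw [fwdT_def'_false, place_eval0]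
      simp only [inv3]
      rw [if_pos hC, hcore]
    · rw [fwdT_def'_false, place_eval1]
      simp only [inv3]
      rw [if_neg hA, if_pos hC, hcore]
    · rw [fwdT_def'_false, place_eval2]
      simp only [inv3]
      rw [if_neg hA, if_neg hB, hcore]
  · have hB : ¬((-(x - y + z)) % 2 = 0) := by omega
    have hcore := core_fwd_true x y z h
    rcases fin3_cases p with rfl | rfl | rfl
    · rw [fwdT_def'_true, place_eval0]
      simp only [inv3]
      rw [if_pos hC, hcore]
    · rw [fwdT_def'_true, place_eval1]
      simp only [inv3]
      rw [if_neg hA, if_pos hC, hcore]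
    · rw [fwdT_def'_true, place_eval2]
      simp only [inv3]
      rw [if_neg hA, if_neg hB, hcore]

private lemma core_recon (a b0 c : ℤ) (ha : a % 2 = 1) (hb : b0 % 2 = 1) (hc : c % 2 = 0) :
    (core a b0 c).2.1 + (core a b0 c).2.2.1 - (core a b0 c).2.2.2 = a ∧
    (if (core a b0 c).1 = true then
        -((core a b0 c).2.1 - (core a b0 c).2.2.1 + (core a b0 c).2.2.2)
      else (core a b0 c).2.1 - (core a b0 c).2.2.1 + (core a b0 c).2.2.2) = b0 ∧
    2 * (core a b0 c).2.2.1 + 2 * (core a b0 c).2.2.2 = c := by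
  by_cases h4 : (a - b0 - c) % 4 = 0
  · have hcore : core a b0 c =
        (false, ((a + b0) / 2, ((a - b0 + c) / 4, (c - a + b0) / 4))) := by
      unfold core; rw [if_pos h4]
    rw [hcore]
    refine ⟨?_, ?_, ?_⟩ <;> simp <;> omega
  · have hcore : core a b0 c =
        (true, ((a - b0) / 2, ((a + b0 + c) / 4, (c - a - b0) / 4))) := by
      unfold core; rw [if_neg h4]
    rw [hcore]
    refine ⟨?_, ?_, ?_⟩ <;> simp <;> omega

private lemma fwdT_inv3 (u v w m : ℤ) (h : u ^ 2 + v ^ 2 + w ^ 2 = 4 * m + 2) :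
    fwdT (inv3 (u, (v, w))) = (u, (v, w)) := by
  rcases sphereParity u v w m h with ⟨h1, h2, h3⟩ | ⟨h1, h2, h3⟩ | ⟨h1, h2, h3⟩
  · simp only [inv3]
    rw [if_pos h1]
    obtain ⟨r1, r2, r3⟩ := core_recon v w u h2 h3 h1
    rw [fwdT_def, place_eval0, r1, r2, r3]
  · simp only [inv3]
    rw [if_neg (by omega), if_pos h2]
    obtain ⟨r1, r2, r3⟩ := core_recon u w v h1 h3 h2
    rw [fwdT_def, place_eval1, r1, r2, r3]
  · simp only [inv3]
    rw [if_neg (by omega), if_neg (by omega)]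
    obtain ⟨r1, r2, r3⟩ := core_recon u v w h1 h2 h3
    rw [fwdT_def, place_eval2, r1, r2, r3]

theorem stmt14 (n : ℕ) :
    6 * Nat.card {p : ℤ × ℤ × ℤ // p.1^2 + 3*p.2.1^2 + 3*p.2.2^2 + 2*p.2.1*p.2.2 = (2*n+1 : ℤ)} = Nat.card {p : ℤ × ℤ × ℤ // p.1^2 + p.2.1^2 + p.2.2^2 = (4*n+2 : ℤ)} := by
  have e : (Fin 3 × Bool) ×
      {p : ℤ × ℤ × ℤ // p.1^2 + 3*p.2.1^2 + 3*p.2.2^2 + 2*p.2.1*p.2.2 = (2*n+1 : ℤ)} ≃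
      {p : ℤ × ℤ × ℤ // p.1^2 + p.2.1^2 + p.2.2^2 = (4*n+2 : ℤ)} :=
    { toFun := fun a =>
        ⟨fwdT (a.1, a.2.1), by
          obtain ⟨⟨p, s⟩, ⟨⟨x, y, z⟩, h⟩⟩ := a
          exact fwdT_sphere p s x y z (n : ℤ) h⟩
      invFun := fun b =>
        ⟨(inv3 b.1).1, ⟨(inv3 b.1).2, by
          obtain ⟨⟨u, v, w⟩, h⟩ := b
          exact inv3_H u v w (n : ℤ) h⟩⟩
      left_inv := by
        rintro ⟨⟨p, s⟩, ⟨⟨x, y, z⟩, h⟩⟩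
        have hodd : (x + y + z) % 2 = 1 := oddH x y z (n : ℤ) h
        have h1 := inv3_fwdT p s x y z hodd
        exact pair_subtype_ext h1 _ _
      right_inv := by
        rintro ⟨⟨u, v, w⟩, h⟩
        exact Subtype.ext (fwdT_inv3 u v w (n : ℤ) h) }
  calc 6 * Nat.card {p : ℤ × ℤ × ℤ //
        p.1^2 + 3*p.2.1^2 + 3*p.2.2^2 + 2*p.2.1*p.2.2 = (2*n+1 : ℤ)}
      = Nat.card (Fin 3 × Bool) * Nat.card {p : ℤ × ℤ × ℤ //
        p.1^2 + 3*p.2.1^2 + 3*p.2.2^2 + 2*p.2.1*p.2.2 = (2*n+1 : ℤ)} := by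
        simp [Nat.card_eq_fintype_card]
    _ = Nat.card ((Fin 3 × Bool) × {p : ℤ × ℤ × ℤ //
        p.1^2 + 3*p.2.1^2 + 3*p.2.2^2 + 2*p.2.1*p.2.2 = (2*n+1 : ℤ)}) :=
        (Nat.card_prod _ _).symm
    _ = _ := Nat.card_congr e
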